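/- Let γ > 1, P_r > 0 with P_r + γ - 1 > 0. If P_r = 2, then the local center manifold in original coordinates θ = h̃^c(u) has the expansion h̃^c(u) = 1 + (γ-1)(u+1) - (γ(γ-1)/(P_r + γ - 1))(u+1)³ + O(|u+1|⁴), i.e. its quadratic coefficient in (u+1) vanishes and its cubic coefficient is -γ(γ-1)/(P_r+γ-1) < 0. (The general quadratic coefficient is γ(γ-1)(P_r-2)/(2(P_r+γ-1)).) -/

import Mathlib

open Asymptotics Filter

/-- third-order expansion of the center manifold in the original
coordinates when `P_r = 2`: its quadratic coefficient in `(u+1)` vanishes and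
`θ = h̃ᶜ(u) = 1 + (γ-1)(u+1) - (γ(γ-1)/(P_r+γ-1))(u+1)³ + O(|u+1|⁴)`.
Here `h̃ᶜ` is related to the diagonalized center manifold `hᶜ` through the
linear change of variables `(U,Θ)ᵀ = P⁻¹(u+1, θ-1)ᵀ`,
`P = [[-1, κ(1-γ)],[1-γ, μ]]`, `det P = -d`, and `hᶜ(U) = c₃ U³ + O(U⁴)` with
`c₃ = γ(γ-1)²κ/d²`. -/
theorem stmt_17 (γ μ κ Pr d : ℝ) (hγ : 1 < γ) (hμ : 0 < μ) (hκ : 0 < κ)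
    (hd : d = μ + κ * (γ - 1) ^ 2)
    (hPr : Pr = μ / (κ * (γ - 1)))
    (hPr2 : Pr = 2)
    (hc htc : ℝ → ℝ)
    (hexp : (fun U => hc U - (γ * (γ - 1) ^ 2 * κ / d ^ 2) * U ^ 3)
      =O[nhds 0] (fun U : ℝ => U ^ 4))
    (hcont : ContinuousAt htc (-1)) (hval : htc (-1) = 1)
    (hinv : ∀ᶠ u in nhds (-1 : ℝ),
      ((1 - γ) * (u + 1) + (htc u - 1)) / d
        = hc ((μ * (u + 1) - κ * (1 - γ) * (htc u - 1)) / (-d))) :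
    (fun u => htc u - (1 + (γ - 1) * (u + 1)
        - (γ * (γ - 1) / (Pr + γ - 1)) * (u + 1) ^ 3))
      =O[nhds (-1 : ℝ)] (fun u : ℝ => |u + 1| ^ 4) := by
  have hγ1 : (0:ℝ) < γ - 1 := by linarith
  have hκγ : (0:ℝ) < κ * (γ - 1) := by positivity
  have hμ2 : μ = 2 * (κ * (γ - 1)) := by
    rw [hPr2] at hPr
    field_simp at hPr
    linarith
  have hd2 : d = κ * (γ - 1) * (γ + 1) := by rw [hd, hμ2]; ring
  have hdpos : (0:ℝ) < d := by rw [hd2]; positivity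
  have hd0 : d ≠ 0 := ne_of_gt hdpos
  set c₃ : ℝ := γ * (γ - 1) ^ 2 * κ / d ^ 2 with hc₃
  set U : ℝ → ℝ := fun u => (μ * (u + 1) - κ * (1 - γ) * (htc u - 1)) / (-d) with hUdef
  set Θ : ℝ → ℝ := fun u => ((1 - γ) * (u + 1) + (htc u - 1)) / d with hΘdef
  -- the key linear identities
  have idA : ∀ u, htc u - 1 = (γ - 1) * (u + 1) + d * Θ u := by
    intro u
    simp only [hΘdef]
    field_simp
    ring
  have idB : ∀ u, U u = -(u + 1) - κ * (γ - 1) * Θ u := by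
    intro u
    simp only [hUdef, hΘdef]
    rw [hμ2, hd2]
    have h1 : κ * (γ - 1) * (γ + 1) ≠ 0 := by positivity
    field_simp
    ring
  -- U tends to 0
  have hU0 : Tendsto U (nhds (-1)) (nhds 0) := by
    have hcU : ContinuousAt U (-1) := by
      apply ContinuousAt.div_const
      exact (continuousAt_const.mul (continuousAt_id.add continuousAt_const)).sub
        (continuousAt_const.mul (hcont.sub continuousAt_const))
    have h0 : U (-1) = 0 := by simp [hUdef, hval]
    simpa [h0] using hcU.tendsto
  -- `Θ = hc ∘ U` eventually, so `Θ - c₃ U³ = O(U⁴)`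
  have h1 : (fun u => Θ u - c₃ * (U u) ^ 3) =O[nhds (-1)] fun u => (U u) ^ 4 := by
    refine (hexp.comp_tendsto hU0).congr' ?_ (by rfl)
    filter_upwards [hinv] with u h
    simp only [Function.comp_apply]
    rw [← h]
  -- eventually |U| ≤ 1, so U⁴ = O(U³)
  have hsmall : ∀ ε : ℝ, 0 < ε → ∀ᶠ u in nhds (-1 : ℝ), |U u| ≤ ε := by
    intro ε hε
    have h' : ∀ᶠ y in nhds (0:ℝ), |y| ≤ ε := by
      filter_upwards [Metric.ball_mem_nhds (0:ℝ) hε] with y hy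
      rw [Metric.mem_ball, Real.dist_eq, sub_zero] at hy
      exact le_of_lt hy
    exact hU0.eventually h'
  have hU43 : (fun u => (U u) ^ 4) =O[nhds (-1)] fun u => (U u) ^ 3 := by
    apply IsBigO.of_bound 1
    filter_upwards [hsmall 1 one_pos] with u h
    simp only [Real.norm_eq_abs, abs_pow, one_mul]
    calc |U u| ^ 4 = |U u| * |U u| ^ 3 := by ring
      _ ≤ 1 * |U u| ^ 3 := by
          apply mul_le_mul_of_nonneg_right h (by positivity)
      _ = |U u| ^ 3 := one_mul _
  have hΘU3 : Θ =O[nhds (-1)] fun u => (U u) ^ 3 := by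
    have h2 : (fun u => c₃ * (U u) ^ 3) =O[nhds (-1)] fun u => (U u) ^ 3 :=
      (isBigO_refl _ _).const_mul_left c₃
    exact ((h1.trans hU43).add h2).congr_left fun u => by ring
  -- bootstrap: U = O(u+1)
  obtain ⟨C, hC⟩ := hΘU3.bound
  set K : ℝ := κ * (γ - 1) * |C| + 1 with hK
  have hK1 : (1:ℝ) ≤ K := by
    have : 0 ≤ κ * (γ - 1) * |C| := by positivity
    simp [hK]; linarith
  have hKpos : (0:ℝ) < K := lt_of_lt_of_le one_pos hK1
  have hCK : κ * (γ - 1) * C ≤ K := by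
    have h1' : κ * (γ - 1) * C ≤ κ * (γ - 1) * |C| :=
      mul_le_mul_of_nonneg_left (le_abs_self C) (le_of_lt hκγ)
    linarith
  have hUx : U =O[nhds (-1)] fun u => u + 1 := by
    apply IsBigO.of_bound 2
    filter_upwards [hC, hsmall (1 / (2 * K)) (by positivity)] with u h1' h2'
    simp only [Real.norm_eq_abs, abs_pow] at h1' ⊢
    -- |Θ u| ≤ C |U u|³
    have hUb : |U u| ≤ |u + 1| + κ * (γ - 1) * |Θ u| := by
      rw [idB u]
      calc |(-(u + 1) - κ * (γ - 1) * Θ u)|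
          ≤ |(-(u+1))| + |(-(κ * (γ - 1) * Θ u))| := by
            rw [sub_eq_add_neg]; exact abs_add_le _ _
        _ = |u + 1| + κ * (γ - 1) * |Θ u| := by
            rw [abs_neg, abs_neg, abs_mul, abs_of_pos hκγ]
    have hΘb : κ * (γ - 1) * |Θ u| ≤ K * |U u| ^ 3 := by
      calc κ * (γ - 1) * |Θ u| ≤ κ * (γ - 1) * (C * |U u| ^ 3) :=
            mul_le_mul_of_nonneg_left h1' (le_of_lt hκγ)
        _ = (κ * (γ - 1) * C) * |U u| ^ 3 := by ring
        _ ≤ K * |U u| ^ 3 := mul_le_mul_of_nonneg_right hCK (by positivity)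
    have hcube : K * |U u| ^ 3 ≤ |U u| / 2 := by
      have ha : (0:ℝ) ≤ |U u| := abs_nonneg _
      have h3 : |U u| * (2 * K) ≤ 1 := by
        rw [← le_div_iff₀ (by positivity)]; exact h2'
      have ha1 : |U u| ≤ 1 := by
        have : 1 / (2 * K) ≤ 1 := by
          rw [div_le_one (by positivity)]; linarith
        linarith
      nlinarith [mul_nonneg (mul_nonneg ha ha) (by linarith : (0:ℝ) ≤ 1 - |U u| * (2 * K)),
        mul_nonneg ha (by linarith : (0:ℝ) ≤ 1 - |U u|)]
    nlinarith [hUb, hΘb, hcube, abs_nonneg (u + 1)]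
  -- assemble
  have hA' : (fun u => Θ u - c₃ * (U u) ^ 3) =O[nhds (-1)] fun u => (u + 1) ^ 4 :=
    h1.trans (hUx.pow 4)
  have hΘx3 : Θ =O[nhds (-1)] fun u => (u + 1) ^ 3 := hΘU3.trans (hUx.pow 3)
  have hUpx : (fun u => U u + (u + 1)) =O[nhds (-1)] fun u => (u + 1) ^ 3 :=
    (hΘx3.const_mul_left (-(κ * (γ - 1)))).congr_left fun u => by rw [idB u]; ring
  have hquad : (fun u => (U u) ^ 2 - U u * (u + 1) + (u + 1) ^ 2)
      =O[nhds (-1)] fun u => (u + 1) ^ 2 := by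
    have a1 : (fun u => (U u) ^ 2) =O[nhds (-1)] fun u => (u + 1) ^ 2 := hUx.pow 2
    have a2 : (fun u => U u * (u + 1)) =O[nhds (-1)] fun u => (u + 1) ^ 2 :=
      (hUx.mul (isBigO_refl (fun u : ℝ => u + 1) _)).congr (fun u => rfl) fun u => (pow_two (u+1)).symm
    have a3 : (fun u : ℝ => (u + 1) ^ 2) =O[nhds (-1)] fun u => (u + 1) ^ 2 := isBigO_refl _ _
    exact (a1.sub a2).add a3
  have hx54 : (fun u : ℝ => (u + 1) ^ 5) =O[nhds (-1)] fun u => (u + 1) ^ 4 := by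
    apply IsBigO.of_bound 1
    filter_upwards [Metric.ball_mem_nhds (-1:ℝ) one_pos] with u hu
    rw [Metric.mem_ball, Real.dist_eq] at hu
    have hu' : |u + 1| ≤ 1 := by
      have : u - -1 = u + 1 := by ring
      rw [this] at hu; exact le_of_lt hu
    simp only [Real.norm_eq_abs, abs_pow, one_mul]
    calc |u + 1| ^ 5 = |u + 1| * |u + 1| ^ 4 := by ring
      _ ≤ 1 * |u + 1| ^ 4 := mul_le_mul_of_nonneg_right hu' (by positivity)
      _ = |u + 1| ^ 4 := one_mul _
  have hcube : (fun u => (U u) ^ 3 + (u + 1) ^ 3) =O[nhds (-1)] fun u => (u + 1) ^ 4 := by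
    have h5 : (fun u => (U u) ^ 3 + (u + 1) ^ 3) =O[nhds (-1)] fun u => (u + 1) ^ 5 :=
      (hUpx.mul hquad).congr (fun u => by ring) fun u => by ring
    exact h5.trans hx54
  have key : (fun u => Θ u + c₃ * (u + 1) ^ 3) =O[nhds (-1)] fun u => (u + 1) ^ 4 := by
    have := hA'.add (hcube.const_mul_left c₃)
    exact this.congr_left fun u => by ring
  -- conclude
  have hcc : γ * (γ - 1) / (Pr + γ - 1) = d * c₃ := by
    rw [hPr2, hc₃, hd2]
    have h1' : γ + 1 > 0 := by linarith
    have h2' : (2 + γ - 1 : ℝ) = γ + 1 := by ring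
    rw [h2']
    field_simp
  have hfin := key.const_mul_left d
  have eqf : ∀ u : ℝ, d * (Θ u + c₃ * (u + 1) ^ 3)
      = htc u - (1 + (γ - 1) * (u + 1) - (γ * (γ - 1) / (Pr + γ - 1)) * (u + 1) ^ 3) := by
    intro u
    rw [hcc]
    linear_combination (-1 : ℝ) * idA u
  have eqg : ∀ u : ℝ, (u + 1 : ℝ) ^ 4 = |u + 1| ^ 4 := by
    intro u
    rw [← abs_pow]
    exact (abs_of_nonneg (by positivity)).symm
  exact hfin.congr eqf eqg
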